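/- arXiv:1806.08142 — 2 statements merged into one kernel-verified Lean document; each statement's English description precedes it below -/
import Mathlib

section
/- Let N ≥ 1, let v be a smooth vector field on ℝ^N and c : ℝ^N → ℝ a smooth function. For a smooth covector field α define the operator a_v(α) on smooth functions by a_v(α)(f) := −c·α(v)·(df)(v), and define the bracket [α,β]_v := c·( β(v)·L_v α − α(v)·L_v β ). Then for all smooth covector fields α, β and every smooth function f : ℝ^N → ℝ one has a_v([α,β]_v)(f) = a_v(α)( a_v(β)(f) ) − a_v(β)( a_v(α)(f) ); that is, a_v is a morphism from the bracket [·,·]_v to the commutator of the associated first-order differential operators. -/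
open scoped ContDiff

/-- Partial derivative `∂f/∂x_s` at `x`. -/
noncomputable def pd {N : ℕ} (s : Fin N) (f : (Fin N → ℝ) → ℝ) (x : Fin N → ℝ) : ℝ :=
  fderiv ℝ f x (Pi.single s 1)

/-- Pairing `α(v) = ∑ s, α_s v_s` of a covector field with a vector field. -/
noncomputable def pairing {N : ℕ} (α v : (Fin N → ℝ) → (Fin N → ℝ)) (x : Fin N → ℝ) : ℝ :=
  ∑ s, α x s * v x s

/-- Lie derivative of a covector field `α` along a vector field `v`:
`(L_v α)_k = ∑ s (v_s ∂α_k/∂x_s + α_s ∂v_s/∂x_k)`. -/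
noncomputable def lieD {N : ℕ} (v α : (Fin N → ℝ) → (Fin N → ℝ)) (x : Fin N → ℝ)
    (k : Fin N) : ℝ :=
  ∑ s, (v x s * pd s (fun y => α y k) x + α x s * pd k (fun y => v y s) x)

/-- The differential `df`, with components `(df)_k = ∂f/∂x_k`. -/
noncomputable def dF {N : ℕ} (f : (Fin N → ℝ) → ℝ) (x : Fin N → ℝ) (k : Fin N) : ℝ :=
  pd k f x

/-- The bracket `[α,β]_v = c (β(v) L_v α − α(v) L_v β)`. -/
noncomputable def brktV {N : ℕ} (c : (Fin N → ℝ) → ℝ) (v : (Fin N → ℝ) → (Fin N → ℝ))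
    (α β : (Fin N → ℝ) → (Fin N → ℝ)) (x : Fin N → ℝ) (k : Fin N) : ℝ :=
  c x * (pairing β v x * lieD v α x k - pairing α v x * lieD v β x k)

/-- The first-order operator `a_v(α)(f) = −c · α(v) · (df)(v)`. -/
noncomputable def aV {N : ℕ} (c : (Fin N → ℝ) → ℝ) (v α : (Fin N → ℝ) → (Fin N → ℝ))
    (f : (Fin N → ℝ) → ℝ) (x : Fin N → ℝ) : ℝ :=
  -(c x) * pairing α v x * pairing (dF f) v x

lemma clm_sum {N : ℕ} (L : (Fin N → ℝ) →L[ℝ] ℝ) (w : Fin N → ℝ) :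
    L w = ∑ s, w s * L (Pi.single s 1) := by
  conv_lhs => rw [← Finset.univ_sum_single w]
  rw [map_sum]
  refine Finset.sum_congr rfl fun s _ => ?_
  have : Pi.single s (w s) = w s • (Pi.single s (1:ℝ) : Fin N → ℝ) := by
    rw [← Pi.single_smul, smul_eq_mul, mul_one]
  rw [this, map_smul, smul_eq_mul]

lemma fderiv_apply_eq {N : ℕ} (g : (Fin N → ℝ) → ℝ) (x w : Fin N → ℝ) :
    fderiv ℝ g x w = ∑ s, w s * pd s g x := clm_sum _ _

lemma pairing_dF {N : ℕ} (f : (Fin N → ℝ) → ℝ) (v : (Fin N → ℝ) → (Fin N → ℝ))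
    (y : Fin N → ℝ) : pairing (dF f) v y = fderiv ℝ f y (v y) := by
  rw [fderiv_apply_eq]
  exact Finset.sum_congr rfl fun s _ => (mul_comm _ _)

lemma fderiv_mul_apply' {N : ℕ} {g h : (Fin N → ℝ) → ℝ} {x : Fin N → ℝ}
    (hg : DifferentiableAt ℝ g x) (hh : DifferentiableAt ℝ h x) (w : Fin N → ℝ) :
    fderiv ℝ (fun y => g y * h y) x w
      = fderiv ℝ g x w * h x + g x * fderiv ℝ h x w := by
  rw [fderiv_fun_mul hg hh]
  simp [smul_eq_mul]
  ring

lemma key {N : ℕ} (v α : (Fin N → ℝ) → (Fin N → ℝ))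
    (hv : ContDiff ℝ ∞ v) (hα : ContDiff ℝ ∞ α) (x : Fin N → ℝ) :
    fderiv ℝ (fun y => pairing α v y) x (v x) = ∑ k, lieD v α x k * v x k := by
  have hαs : ∀ s, ContDiff ℝ ∞ (fun y => α y s) := fun s => contDiff_pi.1 hα s
  have hvs : ∀ s, ContDiff ℝ ∞ (fun y => v y s) := fun s => contDiff_pi.1 hv s
  have hd : ∀ s : Fin N, DifferentiableAt ℝ (fun y => α y s * v y s) x := fun s =>
    (((hαs s).differentiable (by norm_num)).differentiableAt).mul
      (((hvs s).differentiable (by norm_num)).differentiableAt)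
  have h1 : (fun y => pairing α v y) = fun y => ∑ s, α y s * v y s := rfl
  rw [h1, fderiv_fun_sum (fun s _ => hd s), ContinuousLinearMap.sum_apply]
  have h2 : ∀ s : Fin N,
      (fderiv ℝ (fun y => α y s * v y s) x) (v x)
        = (∑ k, v x k * pd k (fun y => α y s) x * v x s)
          + ∑ k, α x s * (v x k * pd k (fun y => v y s) x) := by
    intro s
    rw [fderiv_mul_apply' (((hαs s).differentiable (by norm_num)).differentiableAt)
      (((hvs s).differentiable (by norm_num)).differentiableAt), fderiv_apply_eq, fderiv_apply_eq,
      Finset.sum_mul, Finset.mul_sum]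
  rw [Finset.sum_congr rfl fun s _ => h2 s, Finset.sum_add_distrib]
  have h3 : ∀ k : Fin N, lieD v α x k * v x k
      = (∑ s, v x s * pd s (fun y => α y k) x * v x k)
        + ∑ s, α x s * pd k (fun y => v y s) x * v x k := by
    intro k
    rw [lieD, Finset.sum_mul, ← Finset.sum_add_distrib]
    exact Finset.sum_congr rfl fun s _ => by ring
  rw [Finset.sum_congr rfl fun k _ => h3 k, Finset.sum_add_distrib]
  congr 1
  rw [Finset.sum_comm]
  exact Finset.sum_congr rfl fun s _ => Finset.sum_congr rfl fun k _ => by ring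

/-- `a_v` is a morphism from `[·,·]_v` to the commutator of the associated
first-order differential operators. -/
theorem stmt1 {N : ℕ} (hN : 1 ≤ N)
    (v : (Fin N → ℝ) → (Fin N → ℝ)) (hv : ContDiff ℝ ∞ v)
    (c : (Fin N → ℝ) → ℝ) (hc : ContDiff ℝ ∞ c)
    (α β : (Fin N → ℝ) → (Fin N → ℝ)) (hα : ContDiff ℝ ∞ α) (hβ : ContDiff ℝ ∞ β)
    (f : (Fin N → ℝ) → ℝ) (hf : ContDiff ℝ ∞ f) :
    ∀ x : Fin N → ℝ,
      aV c v (brktV c v α β) f x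
        = aV c v α (aV c v β f) x - aV c v β (aV c v α f) x := by
  intro x
  have hone : (∞ : WithTop ℕ∞) ≠ 0 := by norm_num
  have hPα : ContDiff ℝ ∞ (fun y => pairing α v y) :=
    ContDiff.sum fun s _ => (contDiff_pi.1 hα s).mul (contDiff_pi.1 hv s)
  have hPβ : ContDiff ℝ ∞ (fun y => pairing β v y) :=
    ContDiff.sum fun s _ => (contDiff_pi.1 hβ s).mul (contDiff_pi.1 hv s)
  have hg : ContDiff ℝ ∞ (fun y => fderiv ℝ f y (v y)) :=
    (hf.fderiv_right (by simp)).clm_apply hv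
  have hrw : ∀ (γ : (Fin N → ℝ) → (Fin N → ℝ)),
      aV c v γ f = fun y => -(c y) * pairing γ v y * fderiv ℝ f y (v y) := by
    intro γ; funext y
    show -(c y) * pairing γ v y * pairing (dF f) v y = _
    rw [pairing_dF]
  have expand : ∀ (P : (Fin N → ℝ) → ℝ), ContDiff ℝ ∞ P →
      fderiv ℝ (fun y => -(c y) * P y * fderiv ℝ f y (v y)) x (v x)
      = (-(fderiv ℝ c x (v x)) * P x + -(c x) * fderiv ℝ P x (v x)) * fderiv ℝ f x (v x)
        + (-(c x) * P x) * fderiv ℝ (fun y => fderiv ℝ f y (v y)) x (v x) := by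
    intro P hP
    have hcd : DifferentiableAt ℝ (fun y => -(c y)) x :=
      ((hc.differentiable hone).differentiableAt).neg
    have hPd : DifferentiableAt ℝ P x := (hP.differentiable hone).differentiableAt
    have h1 : DifferentiableAt ℝ (fun y => -(c y) * P y) x := hcd.mul hPd
    have h2 : DifferentiableAt ℝ (fun y => fderiv ℝ f y (v y)) x :=
      (hg.differentiable hone).differentiableAt
    rw [fderiv_mul_apply' h1 h2, fderiv_mul_apply' hcd hPd]
    have : fderiv ℝ (fun y => -(c y)) x (v x) = -(fderiv ℝ c x (v x)) := by
      rw [fderiv_fun_neg]; simp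
    rw [this]
  -- LHS pairing
  have hLpair : pairing (brktV c v α β) v x
      = c x * (pairing β v x * (∑ k, lieD v α x k * v x k)
          - pairing α v x * (∑ k, lieD v β x k * v x k)) := by
    show ∑ s, brktV c v α β x s * v x s = _
    have h : ∀ s : Fin N, brktV c v α β x s * v x s
        = c x * pairing β v x * (lieD v α x s * v x s)
          - c x * pairing α v x * (lieD v β x s * v x s) := fun s => by
      rw [brktV]; ring
    rw [Finset.sum_congr rfl fun s _ => h s, Finset.sum_sub_distrib,
      ← Finset.mul_sum, ← Finset.mul_sum]
    ring
  have e1 : aV c v (brktV c v α β) f x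
      = -(c x) * pairing (brktV c v α β) v x * fderiv ℝ f x (v x) := by
    show -(c x) * _ * pairing (dF f) v x = _
    rw [pairing_dF]
  have e2 : aV c v α (aV c v β f) x
      = -(c x) * pairing α v x * fderiv ℝ (aV c v β f) x (v x) := by
    show -(c x) * _ * pairing (dF (aV c v β f)) v x = _
    rw [pairing_dF]
  have e3 : aV c v β (aV c v α f) x
      = -(c x) * pairing β v x * fderiv ℝ (aV c v α f) x (v x) := by
    show -(c x) * _ * pairing (dF (aV c v α f)) v x = _
    rw [pairing_dF]
  rw [e1, e2, e3, hLpair, hrw α, hrw β, expand _ hPα, expand _ hPβ,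
    key v α hv hα x, key v β hv hβ x]
  ring
end

section
/- Let π be a Poisson tensor on ℝ^N, let c be a Casimir function for π, and let v be a smooth vector field on ℝ^N whose Lie derivative of π vanishes, i.e. ∑_{s=1}^N ( v_s ∂π_{ij}/∂x_s − π_{sj} ∂v_i/∂x_s − π_{is} ∂v_j/∂x_s ) = 0 on ℝ^N for all i, j. For smooth covector fields α, β define the vector field π♯α by (π♯α)_j = ∑_i α_i π_{ij}, the function π(α,β) = ∑_{i,j} α_i π_{ij} β_j, and the bracket [α,β]_{c,v} := L_{π♯α} β − L_{π♯β} α − d(π(α,β)) + c·( β(v)·L_v α − α(v)·L_v β ). Then: (1) for all smooth functions f, g one has [df,dg]_{c,v} = d{f,g} + c·( dg(v)·d(df(v)) − df(v)·d(dg(v)) ); and (2) for all smooth functions f, g, h the cyclic Jacobi identity holds: [[df,dg]_{c,v}, dh]_{c,v} + [[dh,df]_{c,v}, dg]_{c,v} + [[dg,dh]_{c,v}, df]_{c,v} = 0. -/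
open scoped ContDiff

/-- A Poisson tensor on `ℝ^N`: a smooth antisymmetric matrix field satisfying the
Jacobi condition. -/
def IsPoissonTensor {N : ℕ} (π : (Fin N → ℝ) → Matrix (Fin N) (Fin N) ℝ) : Prop :=
  (∀ i j, ContDiff ℝ ∞ fun x => π x i j) ∧
  (∀ x i j, π x j i = - π x i j) ∧
  (∀ x i j k, ∑ s, (pd s (fun y => π y i j) x * π x s k
      + pd s (fun y => π y k i) x * π x s j
      + pd s (fun y => π y j k) x * π x s i) = 0)

/-- `c` is a Casimir function for `π`. -/
def IsCasimir {N : ℕ} (π : (Fin N → ℝ) → Matrix (Fin N) (Fin N) ℝ)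
    (c : (Fin N → ℝ) → ℝ) : Prop :=
  ContDiff ℝ ∞ c ∧ ∀ x j, ∑ s, pd s c x * π x s j = 0

/-- The vector field `π♯α`, with `(π♯α)_j = ∑ i, α_i π_{ij}`. -/
noncomputable def sharp {N : ℕ} (π : (Fin N → ℝ) → Matrix (Fin N) (Fin N) ℝ)
    (α : (Fin N → ℝ) → (Fin N → ℝ)) (x : Fin N → ℝ) (j : Fin N) : ℝ :=
  ∑ i, α x i * π x i j

/-- The function `π(α,β) = ∑_{i,j} α_i π_{ij} β_j`. -/
noncomputable def piAB {N : ℕ} (π : (Fin N → ℝ) → Matrix (Fin N) (Fin N) ℝ)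
    (α β : (Fin N → ℝ) → (Fin N → ℝ)) (x : Fin N → ℝ) : ℝ :=
  ∑ i, ∑ j, α x i * π x i j * β x j

/-- The Poisson bracket `{f,g} = ∑_{i,j} π_{ij} ∂f/∂x_i ∂g/∂x_j`. -/
noncomputable def pB {N : ℕ} (π : (Fin N → ℝ) → Matrix (Fin N) (Fin N) ℝ)
    (f g : (Fin N → ℝ) → ℝ) (x : Fin N → ℝ) : ℝ :=
  ∑ i, ∑ j, π x i j * pd i f x * pd j g x

/-- The deformed bracket
`[α,β]_{c,v} = L_{π♯α} β − L_{π♯β} α − d(π(α,β)) + c (β(v) L_v α − α(v) L_v β)`. -/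
noncomputable def brktCV {N : ℕ} (π : (Fin N → ℝ) → Matrix (Fin N) (Fin N) ℝ)
    (c : (Fin N → ℝ) → ℝ) (v : (Fin N → ℝ) → (Fin N → ℝ))
    (α β : (Fin N → ℝ) → (Fin N → ℝ)) (x : Fin N → ℝ) (k : Fin N) : ℝ :=
  lieD (sharp π α) β x k - lieD (sharp π β) α x k - pd k (piAB π α β) x
    + c x * (pairing β v x * lieD v α x k - pairing α v x * lieD v β x k)

section infra
variable {N : ℕ}

theorem pd_congr {f g : (Fin N → ℝ) → ℝ} (h : ∀ y, f y = g y) (s : Fin N) (x : Fin N → ℝ) :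
    pd s f x = pd s g x := by
  have : f = g := funext h
  rw [this]

theorem pd_add {f g : (Fin N → ℝ) → ℝ} {x : Fin N → ℝ} (hf : DifferentiableAt ℝ f x)
    (hg : DifferentiableAt ℝ g x) (s : Fin N) :
    pd s (fun y => f y + g y) x = pd s f x + pd s g x := by
  unfold pd
  rw [fderiv_fun_add hf hg]; rfl

theorem pd_neg {f : (Fin N → ℝ) → ℝ} {x : Fin N → ℝ} (s : Fin N) :
    pd s (fun y => -(f y)) x = - pd s f x := by
  unfold pd
  rw [fderiv_fun_neg]; rfl

theorem pd_mul {f g : (Fin N → ℝ) → ℝ} {x : Fin N → ℝ} (hf : DifferentiableAt ℝ f x)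
    (hg : DifferentiableAt ℝ g x) (s : Fin N) :
    pd s (fun y => f y * g y) x = pd s f x * g x + f x * pd s g x := by
  unfold pd
  rw [fderiv_fun_mul hf hg]; simp; ring

theorem pd_const (a : ℝ) (s : Fin N) (x : Fin N → ℝ) :
    pd s (fun _ => a) x = 0 := by
  unfold pd; simp

theorem pd_sum {ι : Type*} (t : Finset ι) (f : ι → (Fin N → ℝ) → ℝ) {x : Fin N → ℝ}
    (hf : ∀ i ∈ t, DifferentiableAt ℝ (f i) x) (s : Fin N) :
    pd s (fun y => ∑ i ∈ t, f i y) x = ∑ i ∈ t, pd s (f i) x := by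
  unfold pd
  rw [fderiv_fun_sum hf]; simp

theorem contDiff_pd {f : (Fin N → ℝ) → ℝ} (hf : ContDiff ℝ ∞ f) (s : Fin N) :
    ContDiff ℝ ∞ (fun y => pd s f y) := by
  have h1 : ContDiff ℝ ∞ (fderiv ℝ f) := hf.fderiv_right (le_refl _)
  exact (ContinuousLinearMap.apply ℝ ℝ (Pi.single s (1:ℝ))).contDiff.comp h1

theorem cdiff_dAt {f : (Fin N → ℝ) → ℝ} (hf : ContDiff ℝ ∞ f) (x : Fin N → ℝ) :
    DifferentiableAt ℝ f x :=
  (hf.differentiable (by norm_num)).differentiableAt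

theorem pd_comm {f : (Fin N → ℝ) → ℝ} (hf : ContDiff ℝ ∞ f) (a b : Fin N) (x : Fin N → ℝ) :
    pd a (fun y => pd b f y) x = pd b (fun y => pd a f y) x := by
  have hd : ∀ y, HasFDerivAt f (fderiv ℝ f y) y := fun y =>
    (hf.differentiable (by norm_num) y).hasFDerivAt
  have hfd : ContDiff ℝ ∞ (fderiv ℝ f) := hf.fderiv_right (le_refl _)
  have hd2 : HasFDerivAt (fderiv ℝ f) (fderiv ℝ (fderiv ℝ f) x) x :=
    (hfd.differentiable (by norm_num) x).hasFDerivAt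
  have hsymm := second_derivative_symmetric hd hd2 (Pi.single a 1) (Pi.single b 1)
  have e1 : ∀ (u : Fin N) (w : Fin N → ℝ), pd u (fun y => fderiv ℝ f y w) x
      = fderiv ℝ (fderiv ℝ f) x (Pi.single u 1) w := by
    intro u w
    unfold pd
    have : (fun y => fderiv ℝ f y w)
        = (fun L : (Fin N → ℝ) →L[ℝ] ℝ => L w) ∘ (fderiv ℝ f) := rfl
    rw [this, fderiv_comp]
    · simp only [ContinuousLinearMap.coe_comp', Function.comp_apply]
      rw [show (fun L : (Fin N → ℝ) →L[ℝ] ℝ => L w) = (ContinuousLinearMap.apply ℝ ℝ w : ((Fin N → ℝ) →L[ℝ] ℝ) →L[ℝ] ℝ) from rfl]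
      simp
    · exact (ContinuousLinearMap.apply ℝ ℝ w).differentiableAt
    · exact hfd.differentiable (by norm_num) x
  rw [show (fun y => pd b f y) = (fun y => fderiv ℝ f y (Pi.single b 1)) from rfl]
  rw [show (fun y => pd a f y) = (fun y => fderiv ℝ f y (Pi.single a 1)) from rfl]
  rw [e1 a, e1 b]
  exact hsymm

/-- sum of an antisymmetric double array vanishes -/
theorem sum_antisymm (T : Fin N → Fin N → ℝ) (hT : ∀ k i, T k i = - T i k) :
    ∑ k, ∑ i, T k i = 0 := by
  have h1 : ∑ k, ∑ i, T k i = ∑ k, ∑ i, T i k := Finset.sum_comm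
  have h2 : ∑ k, ∑ i, T i k = ∑ k, ∑ i, -(T k i) :=
    Finset.sum_congr rfl fun k _ => Finset.sum_congr rfl fun i _ => hT i k
  have h3 : ∑ k, ∑ i, -(T k i) = - ∑ k, ∑ i, T k i := by simp
  linarith [h1, h2, h3]

theorem sum3_comm₁₃ (T : Fin N → Fin N → Fin N → ℝ) :
    ∑ i, ∑ j, ∑ s, T i j s = ∑ s, ∑ j, ∑ i, T i j s := by
  calc ∑ i, ∑ j, ∑ s, T i j s
      = ∑ i, ∑ s, ∑ j, T i j s := Finset.sum_congr rfl fun i _ => Finset.sum_comm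
    _ = ∑ s, ∑ i, ∑ j, T i j s := Finset.sum_comm
    _ = ∑ s, ∑ j, ∑ i, T i j s := Finset.sum_congr rfl fun s _ => Finset.sum_comm

theorem sum3_comm₂₃ (T : Fin N → Fin N → Fin N → ℝ) :
    ∑ i, ∑ j, ∑ s, T i j s = ∑ i, ∑ s, ∑ j, T i j s :=
  Finset.sum_congr rfl fun i _ => Finset.sum_comm

end infra

section layer2
variable {N : ℕ} {π : (Fin N → ℝ) → Matrix (Fin N) (Fin N) ℝ}
  {c : (Fin N → ℝ) → ℝ} {v : (Fin N → ℝ) → (Fin N → ℝ)}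
  {f g h u w : (Fin N → ℝ) → ℝ}

theorem smooth_AV (hv : ContDiff ℝ ∞ v) (hf : ContDiff ℝ ∞ f) :
    ContDiff ℝ ∞ (pairing (dF f) v) := by
  unfold pairing dF
  apply ContDiff.sum; intro s _
  exact (contDiff_pd hf s).mul (contDiff_pi.mp hv s)

theorem smooth_pB (hπ1 : ∀ i j, ContDiff ℝ ∞ fun x => π x i j)
    (hf : ContDiff ℝ ∞ f) (hg : ContDiff ℝ ∞ g) :
    ContDiff ℝ ∞ (pB π f g) := by
  unfold pB
  apply ContDiff.sum; intro i _
  apply ContDiff.sum; intro j _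
  exact ((hπ1 i j).mul (contDiff_pd hf i)).mul (contDiff_pd hg j)

theorem smooth_sharp_dF (hπ1 : ∀ i j, ContDiff ℝ ∞ fun x => π x i j)
    (hf : ContDiff ℝ ∞ f) (s : Fin N) :
    ContDiff ℝ ∞ (fun y => sharp π (dF f) y s) := by
  unfold sharp dF
  apply ContDiff.sum; intro i _
  exact (contDiff_pd hf i).mul (hπ1 i s)

theorem cartan {X : (Fin N → ℝ) → Fin N → ℝ} (hX : ∀ s, ContDiff ℝ ∞ (fun y => X y s))
    (hg : ContDiff ℝ ∞ g) (x : Fin N → ℝ) (k : Fin N) :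
    lieD X (dF g) x k = pd k (fun y => ∑ s, pd s g y * X y s) x := by
  rw [pd_sum Finset.univ _
    (fun s _ => cdiff_dAt ((contDiff_pd hg s).mul (hX s)) x) k]
  unfold lieD
  simp only [dF]
  apply Finset.sum_congr rfl; intro s _
  rw [pd_mul (cdiff_dAt (contDiff_pd hg s) x) (cdiff_dAt (hX s) x) k]
  rw [pd_comm hg s k x]
  ring

theorem pw1 (y : Fin N → ℝ) :
    ∑ s, pd s g y * sharp π (dF f) y s = pB π f g y := by
  unfold sharp pB dF
  calc ∑ s, pd s g y * ∑ i, pd i f y * π y i s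
      = ∑ s, ∑ i, π y i s * pd i f y * pd s g y := by
        refine Finset.sum_congr rfl fun s _ => ?_
        rw [Finset.mul_sum]
        exact Finset.sum_congr rfl fun i _ => by ring
    _ = ∑ i, ∑ s, π y i s * pd i f y * pd s g y := Finset.sum_comm

theorem pw2 (hπ2 : ∀ x i j, π x j i = - π x i j) (y : Fin N → ℝ) :
    ∑ s, pd s f y * sharp π (dF g) y s = -(pB π f g y) := by
  unfold sharp pB dF
  calc ∑ s, pd s f y * ∑ i, pd i g y * π y i s
      = ∑ s, ∑ i, -(π y s i * pd s f y * pd i g y) := by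
        refine Finset.sum_congr rfl fun s _ => ?_
        rw [Finset.mul_sum]
        refine Finset.sum_congr rfl fun i _ => ?_
        rw [hπ2 y s i]; ring
    _ = -(∑ s, ∑ i, π y s i * pd s f y * pd i g y) := by
        simp [Finset.sum_neg_distrib]

theorem pw3 (y : Fin N → ℝ) : piAB π (dF f) (dF g) y = pB π f g y := by
  unfold piAB pB dF
  exact Finset.sum_congr rfl fun i _ => Finset.sum_congr rfl fun j _ => by ring

theorem pw4 (y : Fin N → ℝ) :
    piAB π (fun y k => u y * pd k w y) (dF h) y = u y * pB π w h y := by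
  unfold piAB pB dF
  rw [Finset.mul_sum]
  refine Finset.sum_congr rfl fun i _ => ?_
  rw [Finset.mul_sum]
  exact Finset.sum_congr rfl fun j _ => by ring

theorem pw1' (y : Fin N → ℝ) :
    ∑ s, pd s h y * (u y * sharp π (dF w) y s) = u y * pB π w h y := by
  calc ∑ s, pd s h y * (u y * sharp π (dF w) y s)
      = u y * ∑ s, pd s h y * sharp π (dF w) y s := by
        rw [Finset.mul_sum]
        exact Finset.sum_congr rfl fun s _ => by ring
    _ = u y * pB π w h y := by rw [pw1]

end layer2

section part1sec
variable {N : ℕ} {π : (Fin N → ℝ) → Matrix (Fin N) (Fin N) ℝ}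
  {c : (Fin N → ℝ) → ℝ} {v : (Fin N → ℝ) → (Fin N → ℝ)}
  {f g : (Fin N → ℝ) → ℝ}

theorem part1 (hπ1 : ∀ i j, ContDiff ℝ ∞ fun x => π x i j)
    (hπ2 : ∀ x i j, π x j i = - π x i j)
    (hv : ContDiff ℝ ∞ v) (hf : ContDiff ℝ ∞ f) (hg : ContDiff ℝ ∞ g)
    (x : Fin N → ℝ) (k : Fin N) :
    brktCV π c v (dF f) (dF g) x k
      = pd k (pB π f g) x
        + c x * (pairing (dF g) v x * pd k (fun y => pairing (dF f) v y) x
          - pairing (dF f) v x * pd k (fun y => pairing (dF g) v y) x) := by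
  unfold brktCV
  rw [cartan (smooth_sharp_dF hπ1 hf) hg x k]
  rw [cartan (smooth_sharp_dF hπ1 hg) hf x k]
  rw [cartan (fun s => contDiff_pi.mp hv s) hf x k]
  rw [cartan (fun s => contDiff_pi.mp hv s) hg x k]
  rw [pd_congr (pw1 (π := π) (f := f) (g := g)) k x]
  rw [pd_congr (pw2 (π := π) (f := f) (g := g) hπ2) k x]
  rw [pd_neg]
  rw [pd_congr (pw3 (π := π) (f := f) (g := g)) k x]
  have e1 : pd k (fun y => pairing (dF f) v y) x
      = pd k (fun y => ∑ s, pd s f y * v y s) x := pd_congr (fun y => rfl) k x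
  have e2 : pd k (fun y => pairing (dF g) v y) x
      = pd k (fun y => ∑ s, pd s g y * v y s) x := pd_congr (fun y => rfl) k x
  rw [e1, e2]
  ring

end part1sec

section layer3
variable {N : ℕ} {π : (Fin N → ℝ) → Matrix (Fin N) (Fin N) ℝ}
  {c : (Fin N → ℝ) → ℝ} {v : (Fin N → ℝ) → (Fin N → ℝ)}
  {f g h u w : (Fin N → ℝ) → ℝ}

theorem pB_antisym (hπ2 : ∀ x i j, π x j i = - π x i j) (a b : (Fin N → ℝ) → ℝ)
    (y : Fin N → ℝ) : pB π a b y = -(pB π b a y) := by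
  unfold pB
  calc ∑ i, ∑ j, π y i j * pd i a y * pd j b y
      = ∑ i, ∑ j, -(π y j i * pd j b y * pd i a y) := by
        refine Finset.sum_congr rfl fun i _ => Finset.sum_congr rfl fun j _ => ?_
        rw [hπ2 y i j]; ring
    _ = ∑ j, ∑ i, -(π y j i * pd j b y * pd i a y) := Finset.sum_comm
    _ = -(∑ j, ∑ i, π y j i * pd j b y * pd i a y) := by simp
    _ = -(∑ i, ∑ j, π y i j * pd i b y * pd j a y) := rfl

theorem pwsharp (y : Fin N → ℝ) (s : Fin N) :
    sharp π (fun y k => u y * pd k w y) y s = u y * sharp π (dF w) y s := by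
  unfold sharp dF
  rw [Finset.mul_sum]
  exact Finset.sum_congr rfl fun i _ => by ring

theorem lieD_mul {Y : (Fin N → ℝ) → Fin N → ℝ} (hY : ∀ s, ContDiff ℝ ∞ (fun y => Y y s))
    (hu : ContDiff ℝ ∞ u) (hw : ContDiff ℝ ∞ w) (x : Fin N → ℝ) (k : Fin N) :
    lieD Y (fun y k => u y * pd k w y) x k
      = (∑ s, Y x s * pd s u x) * pd k w x + u x * lieD Y (dF w) x k := by
  unfold lieD dF
  rw [Finset.sum_mul, Finset.mul_sum, ← Finset.sum_add_distrib]
  refine Finset.sum_congr rfl fun s _ => ?_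
  have : pd s (fun y => u y * pd k w y) x
      = pd s u x * pd k w x + u x * pd s (fun y => pd k w y) x :=
    pd_mul (cdiff_dAt hu x) (cdiff_dAt (contDiff_pd hw k) x) s
  simp only []
  rw [this]
  ring

end layer3

section master
variable {N : ℕ} {π : (Fin N → ℝ) → Matrix (Fin N) (Fin N) ℝ}
  {c : (Fin N → ℝ) → ℝ} {v : (Fin N → ℝ) → (Fin N → ℝ)}
  {h u w : (Fin N → ℝ) → ℝ}

theorem smooth_sharp_udw (hπ1 : ∀ i j, ContDiff ℝ ∞ fun x => π x i j)
    (hu : ContDiff ℝ ∞ u) (hw : ContDiff ℝ ∞ w) (s : Fin N) :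
    ContDiff ℝ ∞ (fun y => sharp π (fun y k => u y * pd k w y) y s) := by
  unfold sharp
  apply ContDiff.sum; intro i _
  exact (hu.mul (contDiff_pd hw i)).mul (hπ1 i s)

theorem brkt_udw (hπ1 : ∀ i j, ContDiff ℝ ∞ fun x => π x i j)
    (hπ2 : ∀ x i j, π x j i = - π x i j)
    (hv : ContDiff ℝ ∞ v) (hu : ContDiff ℝ ∞ u) (hw : ContDiff ℝ ∞ w)
    (hh : ContDiff ℝ ∞ h) (x : Fin N → ℝ) (k : Fin N) :
    brktCV π c v (fun y k => u y * pd k w y) (dF h) x k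
      = u x * pd k (pB π w h) x + pB π u h x * pd k w x
        + c x * (pairing (dF h) v x * (pairing (dF u) v x * pd k w x
              + u x * pd k (fun y => pairing (dF w) v y) x)
          - u x * pairing (dF w) v x * pd k (fun y => pairing (dF h) v y) x) := by
  have pwA : ∀ y, ∑ s, pd s h y * sharp π (fun y k => u y * pd k w y) y s
      = u y * pB π w h y := by
    intro y
    rw [show (∑ s, pd s h y * sharp π (fun y k => u y * pd k w y) y s)
        = ∑ s, pd s h y * (u y * sharp π (dF w) y s) from
      Finset.sum_congr rfl fun s _ => by rw [pwsharp]]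
    exact pw1' y
  unfold brktCV
  -- term A
  rw [cartan (smooth_sharp_udw hπ1 hu hw) hh x k]
  rw [pd_congr pwA k x]
  rw [pd_mul (cdiff_dAt hu x) (cdiff_dAt (smooth_pB hπ1 hw hh) x) k]
  -- term B
  rw [lieD_mul (smooth_sharp_dF hπ1 hh) hu hw x k]
  have eB1 : ∑ s, sharp π (dF h) x s * pd s u x = pB π h u x := by
    rw [show (∑ s, sharp π (dF h) x s * pd s u x)
        = ∑ s, pd s u x * sharp π (dF h) x s from
      Finset.sum_congr rfl fun s _ => by ring]
    exact pw1 x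
  rw [eB1, pB_antisym hπ2 h u x]
  rw [cartan (smooth_sharp_dF hπ1 hh) hw x k]
  rw [pd_congr (pw1 (π := π) (f := h) (g := w)) k x]
  rw [pd_congr (pB_antisym hπ2 h w) k x, pd_neg]
  -- term C
  rw [pd_congr (pw4 (π := π) (u := u) (w := w) (h := h)) k x]
  rw [pd_mul (cdiff_dAt hu x) (cdiff_dAt (smooth_pB hπ1 hw hh) x) k]
  -- term D
  rw [lieD_mul (fun s => contDiff_pi.mp hv s) hu hw x k]
  have eD1 : ∑ s, v x s * pd s u x = pairing (dF u) v x := by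
    unfold pairing dF
    exact Finset.sum_congr rfl fun s _ => by ring
  rw [eD1]
  rw [cartan (fun s => contDiff_pi.mp hv s) hw x k]
  have eD2 : pd k (fun y => ∑ s, pd s w y * v y s) x
      = pd k (fun y => pairing (dF w) v y) x := pd_congr (fun y => rfl) k x
  rw [eD2]
  rw [cartan (fun s => contDiff_pi.mp hv s) hh x k]
  have eD3 : pd k (fun y => ∑ s, pd s h y * v y s) x
      = pd k (fun y => pairing (dF h) v y) x := pd_congr (fun y => rfl) k x
  rw [eD3]
  have eD4 : pairing (fun y k => u y * pd k w y) v x = u x * pairing (dF w) v x := by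
    unfold pairing dF
    rw [Finset.mul_sum]
    exact Finset.sum_congr rfl fun s _ => by ring
  rw [eD4]
  ring

end master

section additivity
variable {N : ℕ} {π : (Fin N → ℝ) → Matrix (Fin N) (Fin N) ℝ}
  {c : (Fin N → ℝ) → ℝ} {v : (Fin N → ℝ) → (Fin N → ℝ)}
  {α β γ : (Fin N → ℝ) → Fin N → ℝ}

theorem smooth_sharp (hπ1 : ∀ i j, ContDiff ℝ ∞ fun x => π x i j)
    (hα : ∀ k, ContDiff ℝ ∞ fun y => α y k) (s : Fin N) :
    ContDiff ℝ ∞ (fun y => sharp π α y s) := by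
  unfold sharp
  apply ContDiff.sum; intro i _
  exact (hα i).mul (hπ1 i s)

theorem smooth_piAB (hπ1 : ∀ i j, ContDiff ℝ ∞ fun x => π x i j)
    (hα : ∀ k, ContDiff ℝ ∞ fun y => α y k) (hγ : ∀ k, ContDiff ℝ ∞ fun y => γ y k) :
    ContDiff ℝ ∞ (piAB π α γ) := by
  unfold piAB
  apply ContDiff.sum; intro i _
  apply ContDiff.sum; intro j _
  exact ((hα i).mul (hπ1 i j)).mul (hγ j)

theorem sharp_add (y : Fin N → ℝ) (s : Fin N) :
    sharp π (fun y k => α y k + β y k) y s = sharp π α y s + sharp π β y s := by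
  unfold sharp
  rw [← Finset.sum_add_distrib]
  exact Finset.sum_congr rfl fun i _ => by ring

theorem piAB_add (y : Fin N → ℝ) :
    piAB π (fun y k => α y k + β y k) γ y = piAB π α γ y + piAB π β γ y := by
  unfold piAB
  rw [← Finset.sum_add_distrib]
  refine Finset.sum_congr rfl fun i _ => ?_
  rw [← Finset.sum_add_distrib]
  exact Finset.sum_congr rfl fun j _ => by ring

theorem pairing_add (y : Fin N → ℝ) :
    pairing (fun y k => α y k + β y k) v y = pairing α v y + pairing β v y := by
  unfold pairing
  rw [← Finset.sum_add_distrib]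
  exact Finset.sum_congr rfl fun s _ => by ring

theorem lieD_add_right {Y : (Fin N → ℝ) → Fin N → ℝ}
    (hα : ∀ k, ContDiff ℝ ∞ fun y => α y k) (hβ : ∀ k, ContDiff ℝ ∞ fun y => β y k)
    (x : Fin N → ℝ) (k : Fin N) :
    lieD Y (fun y k => α y k + β y k) x k = lieD Y α x k + lieD Y β x k := by
  unfold lieD
  rw [← Finset.sum_add_distrib]
  refine Finset.sum_congr rfl fun s _ => ?_
  simp only []
  rw [pd_add (cdiff_dAt (hα k) x) (cdiff_dAt (hβ k) x) s]
  ring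

theorem brktCV_add (hπ1 : ∀ i j, ContDiff ℝ ∞ fun x => π x i j)
    (hα : ∀ k, ContDiff ℝ ∞ fun y => α y k) (hβ : ∀ k, ContDiff ℝ ∞ fun y => β y k)
    (hγ : ∀ k, ContDiff ℝ ∞ fun y => γ y k)
    (x : Fin N → ℝ) (k : Fin N) :
    brktCV π c v (fun y k => α y k + β y k) γ x k
      = brktCV π c v α γ x k + brktCV π c v β γ x k := by
  unfold brktCV
  have e1 : lieD (sharp π fun y k => α y k + β y k) γ x k
      = lieD (sharp π α) γ x k + lieD (sharp π β) γ x k := by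
    unfold lieD
    rw [← Finset.sum_add_distrib]
    refine Finset.sum_congr rfl fun s _ => ?_
    rw [sharp_add x s]
    rw [pd_congr (fun y => sharp_add (α := α) (β := β) y s) k x]
    rw [pd_add (cdiff_dAt (smooth_sharp hπ1 hα s) x) (cdiff_dAt (smooth_sharp hπ1 hβ s) x) k]
    ring
  have e2 : lieD (sharp π γ) (fun y k => α y k + β y k) x k
      = lieD (sharp π γ) α x k + lieD (sharp π γ) β x k :=
    lieD_add_right hα hβ x k
  have e3 : pd k (piAB π (fun y k => α y k + β y k) γ) x
      = pd k (piAB π α γ) x + pd k (piAB π β γ) x := by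
    rw [pd_congr (piAB_add (α := α) (β := β) (γ := γ)) k x]
    exact pd_add (cdiff_dAt (smooth_piAB hπ1 hα hγ) x) (cdiff_dAt (smooth_piAB hπ1 hβ hγ) x) k
  have e4 : lieD v (fun y k => α y k + β y k) x k = lieD v α x k + lieD v β x k :=
    lieD_add_right hα hβ x k
  rw [e1, e2, e3, e4, pairing_add x]
  ring

end additivity

section casimir
variable {N : ℕ} {π : (Fin N → ℝ) → Matrix (Fin N) (Fin N) ℝ}
  {c q h : (Fin N → ℝ) → ℝ} {v : (Fin N → ℝ) → (Fin N → ℝ)}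

theorem pBc0 (hc2 : ∀ x j, ∑ s, pd s c x * π x s j = 0) (x : Fin N → ℝ) :
    pB π c h x = 0 := by
  unfold pB
  rw [Finset.sum_comm]
  have e : ∑ j, ∑ i, π x i j * pd i c x * pd j h x
      = ∑ j, (∑ i, pd i c x * π x i j) * pd j h x :=
    Finset.sum_congr rfl fun j _ => by
      rw [Finset.sum_mul]
      exact Finset.sum_congr rfl fun i _ => by ring
  rw [e]
  simp [hc2 x]

theorem pB_cmul (hc2 : ∀ x j, ∑ s, pd s c x * π x s j = 0)
    (hcd : ContDiff ℝ ∞ c) (hq : ContDiff ℝ ∞ q) (x : Fin N → ℝ) :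
    pB π (fun y => c y * q y) h x = c x * pB π q h x := by
  have h1 : pB π (fun y => c y * q y) h x = q x * pB π c h x + c x * pB π q h x := by
    unfold pB
    rw [Finset.mul_sum, Finset.mul_sum, ← Finset.sum_add_distrib]
    refine Finset.sum_congr rfl fun i _ => ?_
    rw [Finset.mul_sum, Finset.mul_sum, ← Finset.sum_add_distrib]
    refine Finset.sum_congr rfl fun j _ => ?_
    rw [pd_mul (cdiff_dAt hcd x) (cdiff_dAt hq x) i]
    ring
  rw [h1, pBc0 hc2 x]
  ring

theorem pB_neg {a : (Fin N → ℝ) → ℝ} (x : Fin N → ℝ) :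
    pB π (fun y => -(a y)) h x = -(pB π a h x) := by
  unfold pB
  have e : ∑ i, ∑ j, π x i j * pd i (fun y => -(a y)) x * pd j h x
      = ∑ i, ∑ j, -(π x i j * pd i a x * pd j h x) :=
    Finset.sum_congr rfl fun i _ => Finset.sum_congr rfl fun j _ => by
      rw [pd_neg i]; ring
  rw [e]; simp

theorem AV_mul {a b : (Fin N → ℝ) → ℝ} (ha : ContDiff ℝ ∞ a) (hb : ContDiff ℝ ∞ b)
    (x : Fin N → ℝ) :
    pairing (dF (fun y => a y * b y)) v x
      = a x * pairing (dF b) v x + b x * pairing (dF a) v x := by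
  unfold pairing dF
  rw [Finset.mul_sum, Finset.mul_sum, ← Finset.sum_add_distrib]
  refine Finset.sum_congr rfl fun s _ => ?_
  rw [pd_mul (cdiff_dAt ha x) (cdiff_dAt hb x) s]
  ring

theorem AV_neg {a : (Fin N → ℝ) → ℝ} (x : Fin N → ℝ) :
    pairing (dF (fun y => -(a y))) v x = -(pairing (dF a) v x) := by
  unfold pairing dF
  have e : ∑ s, pd s (fun y => -(a y)) x * v x s = ∑ s, -(pd s a x * v x s) :=
    Finset.sum_congr rfl fun s _ => by rw [pd_neg s]; ring
  rw [e]; simp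

end casimir

section pdpB
variable {N : ℕ} {π : (Fin N → ℝ) → Matrix (Fin N) (Fin N) ℝ}
  {f g : (Fin N → ℝ) → ℝ}

theorem pd_pB (hπ1 : ∀ i j, ContDiff ℝ ∞ fun x => π x i j)
    (hf : ContDiff ℝ ∞ f) (hg : ContDiff ℝ ∞ g) (s : Fin N) (x : Fin N → ℝ) :
    pd s (pB π f g) x = ∑ i, ∑ j, (pd s (fun y => π y i j) x * pd i f x * pd j g x
      + π x i j * pd s (fun y => pd i f y) x * pd j g x
      + π x i j * pd i f x * pd s (fun y => pd j g y) x) := by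
  unfold pB
  rw [pd_sum Finset.univ _ (fun i _ => cdiff_dAt (by
    apply ContDiff.sum; intro j _
    exact ((hπ1 i j).mul (contDiff_pd hf i)).mul (contDiff_pd hg j)) x) s]
  refine Finset.sum_congr rfl fun i _ => ?_
  rw [pd_sum Finset.univ _ (fun j _ => cdiff_dAt
    (((hπ1 i j).mul (contDiff_pd hf i)).mul (contDiff_pd hg j)) x) s]
  refine Finset.sum_congr rfl fun j _ => ?_
  rw [pd_mul (cdiff_dAt ((hπ1 i j).mul (contDiff_pd hf i)) x)
    (cdiff_dAt (contDiff_pd hg j) x) s]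
  rw [pd_mul (cdiff_dAt (hπ1 i j) x) (cdiff_dAt (contDiff_pd hf i) x) s]
  ring

end pdpB

section sumtools
variable {N : ℕ}

theorem sum3_cycle (T : Fin N → Fin N → Fin N → ℝ) :
    ∑ a, ∑ b, ∑ c, T a b c = ∑ b, ∑ c, ∑ a, T a b c := by
  calc ∑ a, ∑ b, ∑ c, T a b c
      = ∑ b, ∑ a, ∑ c, T a b c := Finset.sum_comm
    _ = ∑ b, ∑ c, ∑ a, T a b c := Finset.sum_congr rfl fun b _ => Finset.sum_comm

end sumtools

section avpb
variable {N : ℕ} {π : (Fin N → ℝ) → Matrix (Fin N) (Fin N) ℝ}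
  {v : (Fin N → ℝ) → (Fin N → ℝ)} {f g : (Fin N → ℝ) → ℝ}

theorem AV_pB (hπ1 : ∀ i j, ContDiff ℝ ∞ fun x => π x i j)
    (hv : ContDiff ℝ ∞ v)
    (hLv : ∀ x i j, ∑ s, (v x s * pd s (fun y => π y i j) x
        - π x s j * pd s (fun y => v y i) x
        - π x i s * pd s (fun y => v y j) x) = 0)
    (hf : ContDiff ℝ ∞ f) (hg : ContDiff ℝ ∞ g) (x : Fin N → ℝ) :
    pairing (dF (pB π f g)) v x
      = pB π (fun y => pairing (dF f) v y) g x
        + pB π f (fun y => pairing (dF g) v y) x := by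
  have eL : pairing (dF (pB π f g)) v x
      = ∑ s, ∑ i, ∑ j, ((pd s (fun y => π y i j) x * pd i f x * pd j g x
        + π x i j * pd s (fun y => pd i f y) x * pd j g x
        + π x i j * pd i f x * pd s (fun y => pd j g y) x) * v x s) := by
    unfold pairing dF
    refine Finset.sum_congr rfl fun s _ => ?_
    rw [pd_pB hπ1 hf hg s x, Finset.sum_mul]
    refine Finset.sum_congr rfl fun i _ => ?_
    rw [Finset.sum_mul]
  have eR1 : pB π (fun y => pairing (dF f) v y) g x
      = ∑ i, ∑ j, ∑ s, (π x i j * (pd i (fun y => pd s f y) x * v x s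
          + pd s f x * pd i (fun y => v y s) x) * pd j g x) := by
    unfold pB
    refine Finset.sum_congr rfl fun i _ => ?_
    refine Finset.sum_congr rfl fun j _ => ?_
    have e : pd i (pairing (dF f) v) x
        = ∑ s, (pd i (fun y => pd s f y) x * v x s + pd s f x * pd i (fun y => v y s) x) := by
      have e0 : pd i (pairing (dF f) v) x = pd i (fun y => ∑ s, pd s f y * v y s) x :=
        pd_congr (fun y => rfl) i x
      rw [e0, pd_sum Finset.univ _
        (fun s _ => cdiff_dAt ((contDiff_pd hf s).mul (contDiff_pi.mp hv s)) x) i]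
      exact Finset.sum_congr rfl fun s _ =>
        pd_mul (cdiff_dAt (contDiff_pd hf s) x) (cdiff_dAt (contDiff_pi.mp hv s) x) i
    rw [e, Finset.mul_sum, Finset.sum_mul]
  have eR2 : pB π f (fun y => pairing (dF g) v y) x
      = ∑ i, ∑ j, ∑ s, (π x i j * pd i f x * (pd j (fun y => pd s g y) x * v x s
          + pd s g x * pd j (fun y => v y s) x)) := by
    unfold pB
    refine Finset.sum_congr rfl fun i _ => ?_
    refine Finset.sum_congr rfl fun j _ => ?_
    have e : pd j (pairing (dF g) v) x
        = ∑ s, (pd j (fun y => pd s g y) x * v x s + pd s g x * pd j (fun y => v y s) x) := by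
      have e0 : pd j (pairing (dF g) v) x = pd j (fun y => ∑ s, pd s g y * v y s) x :=
        pd_congr (fun y => rfl) j x
      rw [e0, pd_sum Finset.univ _
        (fun s _ => cdiff_dAt ((contDiff_pd hg s).mul (contDiff_pi.mp hv s)) x) j]
      exact Finset.sum_congr rfl fun s _ =>
        pd_mul (cdiff_dAt (contDiff_pd hg s) x) (cdiff_dAt (contDiff_pi.mp hv s) x) j
    rw [e, Finset.mul_sum]
  rw [eL, eR1, eR2]
  rw [sum3_cycle]
  -- split all sums
  simp only [add_mul, mul_add, Finset.sum_add_distrib]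
  -- now equate pieces
  have hBf : ∑ i, ∑ j, ∑ s, π x i j * pd s (fun y => pd i f y) x * pd j g x * v x s
      = ∑ i, ∑ j, ∑ s, π x i j * (pd i (fun y => pd s f y) x * v x s) * pd j g x := by
    refine Finset.sum_congr rfl fun i _ => Finset.sum_congr rfl fun j _ =>
      Finset.sum_congr rfl fun s _ => ?_
    rw [pd_comm hf i s x]
    ring
  have hCg : ∑ i, ∑ j, ∑ s, π x i j * pd i f x * pd s (fun y => pd j g y) x * v x s
      = ∑ i, ∑ j, ∑ s, π x i j * pd i f x * (pd j (fun y => pd s g y) x * v x s) := by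
    refine Finset.sum_congr rfl fun i _ => Finset.sum_congr rfl fun j _ =>
      Finset.sum_congr rfl fun s _ => ?_
    rw [pd_comm hg j s x]
    ring
  have hR1b : ∑ i, ∑ j, ∑ s, π x i j * (pd s f x * pd i (fun y => v y s) x) * pd j g x
      = ∑ i, ∑ j, ∑ s, π x s j * (pd i f x * pd s (fun y => v y i) x) * pd j g x := by
    calc ∑ i, ∑ j, ∑ s, π x i j * (pd s f x * pd i (fun y => v y s) x) * pd j g x
        = ∑ s, ∑ j, ∑ i, π x i j * (pd s f x * pd i (fun y => v y s) x) * pd j g x :=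
          sum3_comm₁₃ _
      _ = ∑ i, ∑ j, ∑ s, π x s j * (pd i f x * pd s (fun y => v y i) x) * pd j g x := rfl
  have hR2b : ∑ i, ∑ j, ∑ s, π x i j * pd i f x * (pd s g x * pd j (fun y => v y s) x)
      = ∑ i, ∑ j, ∑ s, π x i s * pd i f x * (pd j g x * pd s (fun y => v y j) x) := by
    calc ∑ i, ∑ j, ∑ s, π x i j * pd i f x * (pd s g x * pd j (fun y => v y s) x)
        = ∑ i, ∑ s, ∑ j, π x i j * pd i f x * (pd s g x * pd j (fun y => v y s) x) :=
          sum3_comm₂₃ _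
      _ = ∑ i, ∑ j, ∑ s, π x i s * pd i f x * (pd j g x * pd s (fun y => v y j) x) := rfl
  have hA : ∑ i, ∑ j, ∑ s, pd s (fun y => π y i j) x * pd i f x * pd j g x * v x s
      = (∑ i, ∑ j, ∑ s, π x s j * (pd i f x * pd s (fun y => v y i) x) * pd j g x)
        + ∑ i, ∑ j, ∑ s, π x i s * pd i f x * (pd j g x * pd s (fun y => v y j) x) := by
    rw [← Finset.sum_add_distrib]
    refine Finset.sum_congr rfl fun i _ => ?_
    rw [← Finset.sum_add_distrib]
    refine Finset.sum_congr rfl fun j _ => ?_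
    have h0 := hLv x i j
    have h1 : ∑ s, ((v x s * pd s (fun y => π y i j) x
        - π x s j * pd s (fun y => v y i) x
        - π x i s * pd s (fun y => v y j) x) * (pd i f x * pd j g x)) = 0 := by
      rw [← Finset.sum_mul, h0, zero_mul]
    have h2 : ∀ s, (v x s * pd s (fun y => π y i j) x
        - π x s j * pd s (fun y => v y i) x
        - π x i s * pd s (fun y => v y j) x) * (pd i f x * pd j g x)
        = pd s (fun y => π y i j) x * pd i f x * pd j g x * v x s
          - (π x s j * (pd i f x * pd s (fun y => v y i) x) * pd j g x
            + π x i s * pd i f x * (pd j g x * pd s (fun y => v y j) x)) := fun s => by ring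
    rw [Finset.sum_congr rfl (fun s _ => h2 s)] at h1
    rw [Finset.sum_sub_distrib, Finset.sum_add_distrib] at h1
    linarith [h1]
  linarith [hA, hBf, hCg, hR1b, hR2b]
end avpb

section jacobi
variable {N : ℕ} {π : (Fin N → ℝ) → Matrix (Fin N) (Fin N) ℝ}
  {f g h a b e φ β γ : (Fin N → ℝ) → ℝ}

theorem sum2_neg {T U : Fin N → Fin N → ℝ} (hTU : ∀ l j, T l j = - U l j) :
    ∑ l, ∑ j, T l j = - ∑ l, ∑ j, U l j := by
  have : ∑ l, ∑ j, T l j = ∑ l, ∑ j, -(U l j) :=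
    Finset.sum_congr rfl fun l _ => Finset.sum_congr rfl fun j _ => hTU l j
  rw [this]; simp

theorem sum4_p23 (T : Fin N → Fin N → Fin N → Fin N → ℝ) :
    ∑ a, ∑ b, ∑ c, ∑ d, T a b c d = ∑ a, ∑ b, ∑ c, ∑ d, T a c b d :=
  Finset.sum_congr rfl fun a _ => Finset.sum_comm

theorem sum4_c234' (T : Fin N → Fin N → Fin N → Fin N → ℝ) :
    ∑ a, ∑ b, ∑ c, ∑ d, T a b c d = ∑ a, ∑ b, ∑ c, ∑ d, T a d b c :=
  Finset.sum_congr rfl fun a _ => sum3_cycle _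

theorem sum4_c234 (T : Fin N → Fin N → Fin N → Fin N → ℝ) :
    ∑ a, ∑ b, ∑ c, ∑ d, T a b c d = ∑ a, ∑ b, ∑ c, ∑ d, T a c d b := by
  rw [sum4_c234' T, sum4_c234' (fun a b c d => T a d b c)]

theorem sum4_rot1 (T : Fin N → Fin N → Fin N → Fin N → ℝ) :
    ∑ a, ∑ b, ∑ c, ∑ d, T a b c d = ∑ a, ∑ b, ∑ c, ∑ d, T d a b c := by
  calc ∑ a, ∑ b, ∑ c, ∑ d, T a b c d
      = ∑ b, ∑ a, ∑ c, ∑ d, T a b c d := Finset.sum_comm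
    _ = ∑ b, ∑ c, ∑ a, ∑ d, T a b c d :=
        Finset.sum_congr rfl fun b _ => Finset.sum_comm
    _ = ∑ b, ∑ c, ∑ d, ∑ a, T a b c d :=
        Finset.sum_congr rfl fun b _ => Finset.sum_congr rfl fun c _ => Finset.sum_comm

theorem pB_pB (hπ1 : ∀ i j, ContDiff ℝ ∞ fun x => π x i j)
    (ha : ContDiff ℝ ∞ a) (hb : ContDiff ℝ ∞ b) (x : Fin N → ℝ) :
    pB π (pB π a b) e x = ∑ k, ∑ l, ∑ i, ∑ j,
      (π x k l * pd k (fun y => π y i j) x * pd i a x * pd j b x * pd l e x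
      + π x k l * π x i j * pd k (fun y => pd i a y) x * pd j b x * pd l e x
      + π x k l * π x i j * pd i a x * pd k (fun y => pd j b y) x * pd l e x) := by
  calc pB π (pB π a b) e x
      = ∑ k, ∑ l, π x k l * pd k (pB π a b) x * pd l e x := rfl
    _ = _ := by
      refine Finset.sum_congr rfl fun k _ => Finset.sum_congr rfl fun l _ => ?_
      rw [pd_pB hπ1 ha hb k x, Finset.mul_sum, Finset.sum_mul]
      refine Finset.sum_congr rfl fun i _ => ?_
      rw [Finset.mul_sum, Finset.sum_mul]
      exact Finset.sum_congr rfl fun j _ => by ring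

theorem hess_cancel (hπ2 : ∀ x i j, π x j i = - π x i j)
    (hφ : ContDiff ℝ ∞ φ) (x : Fin N → ℝ) :
    (∑ k, ∑ l, ∑ i, ∑ j,
      π x k l * π x i j * pd k (fun y => pd i φ y) x * pd j β x * pd l γ x)
    + (∑ k, ∑ l, ∑ i, ∑ j,
      π x k l * π x i j * pd i γ x * pd k (fun y => pd j φ y) x * pd l β x) = 0 := by
  rw [sum4_c234' (fun k l i j =>
    π x k l * π x i j * pd i γ x * pd k (fun y => pd j φ y) x * pd l β x)]
  simp only [← Finset.sum_add_distrib]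
  rw [sum4_p23 (fun k l i j =>
    π x k l * π x i j * pd k (fun y => pd i φ y) x * pd j β x * pd l γ x
    + π x k j * π x l i * pd l γ x * pd k (fun y => pd i φ y) x * pd j β x)]
  refine sum_antisymm _ fun k i => sum2_neg fun l j => ?_
  rw [pd_comm hφ i k x, hπ2 x i l, hπ2 x k l]
  ring

theorem jac_contract
    (hπ3 : ∀ x i j k, ∑ s, (pd s (fun y => π y i j) x * π x s k
      + pd s (fun y => π y k i) x * π x s j
      + pd s (fun y => π y j k) x * π x s i) = 0) (x : Fin N → ℝ) :
    (∑ k, ∑ l, ∑ i, ∑ j,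
      π x k l * pd k (fun y => π y i j) x * pd i f x * pd j g x * pd l h x)
    + (∑ k, ∑ l, ∑ i, ∑ j,
      π x k l * pd k (fun y => π y i j) x * pd i h x * pd j f x * pd l g x)
    + (∑ k, ∑ l, ∑ i, ∑ j,
      π x k l * pd k (fun y => π y i j) x * pd i g x * pd j h x * pd l f x) = 0 := by
  rw [sum4_c234' (fun k l i j =>
    π x k l * pd k (fun y => π y i j) x * pd i h x * pd j f x * pd l g x)]
  rw [sum4_c234 (fun k l i j =>
    π x k l * pd k (fun y => π y i j) x * pd i g x * pd j h x * pd l f x)]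
  simp only [← Finset.sum_add_distrib]
  rw [sum4_rot1 (fun k l i j =>
    π x k l * pd k (fun y => π y i j) x * pd i f x * pd j g x * pd l h x
    + π x k j * pd k (fun y => π y l i) x * pd l h x * pd i f x * pd j g x
    + π x k i * pd k (fun y => π y j l) x * pd j g x * pd l h x * pd i f x)]
  refine Finset.sum_eq_zero fun a _ => ?_
  refine Finset.sum_eq_zero fun b _ => ?_
  refine Finset.sum_eq_zero fun c _ => ?_
  calc ∑ d, (π x d a * pd d (fun y => π y b c) x * pd b f x * pd c g x * pd a h x
      + π x d c * pd d (fun y => π y a b) x * pd a h x * pd b f x * pd c g x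
      + π x d b * pd d (fun y => π y c a) x * pd c g x * pd a h x * pd b f x)
      = ∑ d, ((pd d (fun y => π y b c) x * π x d a
          + pd d (fun y => π y a b) x * π x d c
          + pd d (fun y => π y c a) x * π x d b)
        * (pd b f x * pd c g x * pd a h x)) :=
        Finset.sum_congr rfl fun d _ => by ring
    _ = (∑ d, (pd d (fun y => π y b c) x * π x d a
          + pd d (fun y => π y a b) x * π x d c
          + pd d (fun y => π y c a) x * π x d b))
        * (pd b f x * pd c g x * pd a h x) := (Finset.sum_mul _ _ _).symm
    _ = 0 := by rw [hπ3 x b c a, zero_mul]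

end jacobi

section jacobiMain
variable {N : ℕ} {π : (Fin N → ℝ) → Matrix (Fin N) (Fin N) ℝ}
  {f g h : (Fin N → ℝ) → ℝ}

theorem pB_jacobi (hπ1 : ∀ i j, ContDiff ℝ ∞ fun x => π x i j)
    (hπ2 : ∀ x i j, π x j i = - π x i j)
    (hπ3 : ∀ x i j k, ∑ s, (pd s (fun y => π y i j) x * π x s k
      + pd s (fun y => π y k i) x * π x s j
      + pd s (fun y => π y j k) x * π x s i) = 0)
    (hf : ContDiff ℝ ∞ f) (hg : ContDiff ℝ ∞ g) (hh : ContDiff ℝ ∞ h)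
    (x : Fin N → ℝ) :
    pB π (pB π f g) h x + pB π (pB π h f) g x + pB π (pB π g h) f x = 0 := by
  rw [pB_pB hπ1 hf hg x, pB_pB hπ1 hh hf x, pB_pB hπ1 hg hh x]
  simp only [Finset.sum_add_distrib]
  have hF := hess_cancel (φ := f) (β := g) (γ := h) hπ2 hf x
  have hG := hess_cancel (φ := g) (β := h) (γ := f) hπ2 hg x
  have hH := hess_cancel (φ := h) (β := f) (γ := g) hπ2 hh x
  have hJ := jac_contract (f := f) (g := g) (h := h) hπ3 x
  linarith

end jacobiMain

section outer
variable {N : ℕ} {π : (Fin N → ℝ) → Matrix (Fin N) (Fin N) ℝ}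
  {c : (Fin N → ℝ) → ℝ} {v : (Fin N → ℝ) → (Fin N → ℝ)}
  {f g h : (Fin N → ℝ) → ℝ}

theorem outer_formula (hπ1 : ∀ i j, ContDiff ℝ ∞ fun x => π x i j)
    (hπ2 : ∀ x i j, π x j i = - π x i j)
    (hc1 : ContDiff ℝ ∞ c) (hc2 : ∀ x j, ∑ s, pd s c x * π x s j = 0)
    (hv : ContDiff ℝ ∞ v)
    (hLv : ∀ x i j, ∑ s, (v x s * pd s (fun y => π y i j) x
        - π x s j * pd s (fun y => v y i) x
        - π x i s * pd s (fun y => v y j) x) = 0)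
    (hf : ContDiff ℝ ∞ f) (hg : ContDiff ℝ ∞ g) (hh : ContDiff ℝ ∞ h)
    (x : Fin N → ℝ) (k : Fin N) :
    brktCV π c v (brktCV π c v (dF f) (dF g)) (dF h) x k
      = pd k (pB π (pB π f g) h) x
        + c x * (pairing (dF h) v x * (pd k (pB π (fun y => pairing (dF f) v y) g) x
              + pd k (pB π f (fun y => pairing (dF g) v y)) x)
            - (pB π (fun y => pairing (dF f) v y) g x
              + pB π f (fun y => pairing (dF g) v y) x) * pd k (fun y => pairing (dF h) v y) x)
        + (c x * pairing (dF g) v x * pd k (pB π (fun y => pairing (dF f) v y) h) x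
           + c x * pB π (fun y => pairing (dF g) v y) h x * pd k (fun y => pairing (dF f) v y) x
           + c x * (pairing (dF h) v x
                * ((c x * pairing (dF (fun z => pairing (dF g) v z)) v x
                    + pairing (dF g) v x * pairing (dF c) v x) * pd k (fun y => pairing (dF f) v y) x
                  + c x * pairing (dF g) v x * pd k (fun y => pairing (dF (fun z => pairing (dF f) v z)) v y) x)
              - c x * pairing (dF g) v x * pairing (dF (fun z => pairing (dF f) v z)) v x
                  * pd k (fun y => pairing (dF h) v y) x))
        + (-(c x * pairing (dF f) v x) * pd k (pB π (fun y => pairing (dF g) v y) h) x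
           + -(c x * pB π (fun y => pairing (dF f) v y) h x) * pd k (fun y => pairing (dF g) v y) x
           + c x * (pairing (dF h) v x
                * (-(c x * pairing (dF (fun z => pairing (dF f) v z)) v x
                    + pairing (dF f) v x * pairing (dF c) v x) * pd k (fun y => pairing (dF g) v y) x
                  + -(c x * pairing (dF f) v x) * pd k (fun y => pairing (dF (fun z => pairing (dF g) v z)) v y) x)
              - -(c x * pairing (dF f) v x) * pairing (dF (fun z => pairing (dF g) v z)) v x
                  * pd k (fun y => pairing (dF h) v y) x)) := by
  have sAf : ContDiff ℝ ∞ (fun y => pairing (dF f) v y) := smooth_AV hv hf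
  have sAg : ContDiff ℝ ∞ (fun y => pairing (dF g) v y) := smooth_AV hv hg
  have sP : ContDiff ℝ ∞ (pB π f g) := smooth_pB hπ1 hf hg
  have hu1 : ContDiff ℝ ∞ (fun y => c y * pairing (dF g) v y) := hc1.mul sAg
  have hu2 : ContDiff ℝ ∞ (fun y => -(c y * pairing (dF f) v y)) := (hc1.mul sAf).neg
  have hA : brktCV π c v (dF f) (dF g)
      = fun y k => dF (pB π f g) y k
        + (c y * pairing (dF g) v y * pd k (fun z => pairing (dF f) v z) y
          + -(c y * pairing (dF f) v y) * pd k (fun z => pairing (dF g) v z) y) := by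
    funext y k
    rw [part1 hπ1 hπ2 hv hf hg y k]
    show _ = pd k (pB π f g) y + _
    ring
  rw [hA]
  rw [brktCV_add (α := dF (pB π f g))
    (β := fun y k => c y * pairing (dF g) v y * pd k (fun z => pairing (dF f) v z) y
      + -(c y * pairing (dF f) v y) * pd k (fun z => pairing (dF g) v z) y)
    (γ := dF h) hπ1
    (fun k => contDiff_pd sP k)
    (fun k => (hu1.mul (contDiff_pd sAf k)).add (hu2.mul (contDiff_pd sAg k)))
    (fun k => contDiff_pd hh k) x k]
  rw [brktCV_add (α := fun y k => c y * pairing (dF g) v y * pd k (fun z => pairing (dF f) v z) y)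
    (β := fun y k => -(c y * pairing (dF f) v y) * pd k (fun z => pairing (dF g) v z) y)
    (γ := dF h) hπ1
    (fun k => hu1.mul (contDiff_pd sAf k))
    (fun k => hu2.mul (contDiff_pd sAg k))
    (fun k => contDiff_pd hh k) x k]
  rw [part1 hπ1 hπ2 hv sP hh x k]
  rw [brkt_udw (u := fun y => c y * pairing (dF g) v y)
    (w := fun z => pairing (dF f) v z) hπ1 hπ2 hv hu1 sAf hh x k]
  rw [brkt_udw (u := fun y => -(c y * pairing (dF f) v y))
    (w := fun z => pairing (dF g) v z) hπ1 hπ2 hv hu2 sAg hh x k]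
  rw [pB_cmul (c := c) (q := fun y => pairing (dF g) v y) (h := h) hc2 hc1 sAg x]
  rw [AV_mul (a := c) (b := fun y => pairing (dF g) v y) hc1 sAg x]
  rw [pB_neg (a := fun y => c y * pairing (dF f) v y) (h := h) x]
  rw [pB_cmul (c := c) (q := fun y => pairing (dF f) v y) (h := h) hc2 hc1 sAf x]
  rw [AV_neg (a := fun y => c y * pairing (dF f) v y) x]
  rw [AV_mul (a := c) (b := fun y => pairing (dF f) v y) hc1 sAf x]
  rw [AV_pB hπ1 hv hLv hf hg x]
  have hW : pd k (fun y => pairing (dF (pB π f g)) v y) x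
      = pd k (pB π (fun y => pairing (dF f) v y) g) x
        + pd k (pB π f (fun y => pairing (dF g) v y)) x := by
    rw [pd_congr (fun y => AV_pB hπ1 hv hLv hf hg y) k x]
    exact pd_add (cdiff_dAt (smooth_pB hπ1 sAf hg) x)
      (cdiff_dAt (smooth_pB hπ1 hf sAg) x) k
  rw [hW]
  ring

end outer

/-- on differentials, `[df,dg]_{c,v} = d{f,g} + c(dg(v) d(df(v)) − df(v) d(dg(v)))`,
and the cyclic Jacobi identity holds. -/
theorem stmt2 {N : ℕ} (hN : 1 ≤ N)
    (π : (Fin N → ℝ) → Matrix (Fin N) (Fin N) ℝ) (hπ : IsPoissonTensor π)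
    (c : (Fin N → ℝ) → ℝ) (hc : IsCasimir π c)
    (v : (Fin N → ℝ) → (Fin N → ℝ)) (hv : ContDiff ℝ ∞ v)
    (hLv : ∀ x i j, ∑ s, (v x s * pd s (fun y => π y i j) x
        - π x s j * pd s (fun y => v y i) x
        - π x i s * pd s (fun y => v y j) x) = 0)
    (f g h : (Fin N → ℝ) → ℝ)
    (hf : ContDiff ℝ ∞ f) (hg : ContDiff ℝ ∞ g) (hh : ContDiff ℝ ∞ h) :
    (∀ (x : Fin N → ℝ) (k : Fin N),
      brktCV π c v (dF f) (dF g) x k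
        = pd k (pB π f g) x
          + c x * (pairing (dF g) v x * pd k (fun y => pairing (dF f) v y) x
            - pairing (dF f) v x * pd k (fun y => pairing (dF g) v y) x)) ∧
    (∀ (x : Fin N → ℝ) (k : Fin N),
      brktCV π c v (brktCV π c v (dF f) (dF g)) (dF h) x k
        + brktCV π c v (brktCV π c v (dF h) (dF f)) (dF g) x k
        + brktCV π c v (brktCV π c v (dF g) (dF h)) (dF f) x k = 0) := by
  obtain ⟨hπ1, hπ2, hπ3⟩ := hπ
  obtain ⟨hc1, hc2⟩ := hc
  constructor
  · exact fun x k => part1 hπ1 hπ2 hv hf hg x k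
  · intro x k
    have T1 := outer_formula hπ1 hπ2 hc1 hc2 hv hLv hf hg hh x k
    have T2 := outer_formula hπ1 hπ2 hc1 hc2 hv hLv hh hf hg x k
    have T3 := outer_formula hπ1 hπ2 hc1 hc2 hv hLv hg hh hf x k
    have hJ : pd k (pB π (pB π f g) h) x + pd k (pB π (pB π h f) g) x
        + pd k (pB π (pB π g h) f) x = 0 := by
      have e0 : pd k (fun y => pB π (pB π f g) h y + pB π (pB π h f) g y
          + pB π (pB π g h) f y) x = pd k (fun _ => (0:ℝ)) x :=
        pd_congr (fun y => pB_jacobi hπ1 hπ2 hπ3 hf hg hh y) k x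
      rw [pd_const] at e0
      rw [pd_add (x := x)
        (f := fun y => pB π (pB π f g) h y + pB π (pB π h f) g y)
        (g := fun y => pB π (pB π g h) f y)
        (cdiff_dAt ((smooth_pB hπ1 (smooth_pB hπ1 hf hg) hh).add
          (smooth_pB hπ1 (smooth_pB hπ1 hh hf) hg)) x)
        (cdiff_dAt (smooth_pB hπ1 (smooth_pB hπ1 hg hh) hf) x) k] at e0
      rw [pd_add (x := x)
        (f := fun y => pB π (pB π f g) h y)
        (g := fun y => pB π (pB π h f) g y)
        (cdiff_dAt (smooth_pB hπ1 (smooth_pB hπ1 hf hg) hh) x)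
        (cdiff_dAt (smooth_pB hπ1 (smooth_pB hπ1 hh hf) hg) x) k] at e0
      linarith
    have fl1v : pB π f (fun y => pairing (dF g) v y) x
        = -(pB π (fun y => pairing (dF g) v y) f x) := pB_antisym hπ2 _ _ x
    have fl1p : pd k (pB π f (fun y => pairing (dF g) v y)) x
        = -(pd k (pB π (fun y => pairing (dF g) v y) f) x) := by
      rw [pd_congr (pB_antisym hπ2 f (fun y => pairing (dF g) v y)) k x, pd_neg]
    have fl2v : pB π h (fun y => pairing (dF f) v y) x
        = -(pB π (fun y => pairing (dF f) v y) h x) := pB_antisym hπ2 _ _ x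
    have fl2p : pd k (pB π h (fun y => pairing (dF f) v y)) x
        = -(pd k (pB π (fun y => pairing (dF f) v y) h) x) := by
      rw [pd_congr (pB_antisym hπ2 h (fun y => pairing (dF f) v y)) k x, pd_neg]
    have fl3v : pB π g (fun y => pairing (dF h) v y) x
        = -(pB π (fun y => pairing (dF h) v y) g x) := pB_antisym hπ2 _ _ x
    have fl3p : pd k (pB π g (fun y => pairing (dF h) v y)) x
        = -(pd k (pB π (fun y => pairing (dF h) v y) g) x) := by
      rw [pd_congr (pB_antisym hπ2 g (fun y => pairing (dF h) v y)) k x, pd_neg]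
    rw [T1, T2, T3, fl1v, fl1p, fl2v, fl2p, fl3v, fl3p]
    linear_combination hJ
end
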